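/- Let G be the free group (or the mapping class group action) generated by Hurwitz moves and cyclic permutation acting on cyclically ordered tuples of elements of a group Γ with distinguished elements a, b satisfying τ_b^{-1}τ_a^{-1}(b) = a, where τ_x denotes conjugation-type action. Then the tuple (a, ..., a, τ_a^{2k}(b), b) with 2k+1 copies of a is Hurwitz-equivalent to the tuple (a, ..., a, b) with 2k+2 copies of a. -/

import Mathlib

/-!
Statement 10: abstract Hurwitz moves.  For a set `Γ` of "vanishing cycles"
with a family of bijections `τ : Γ → Equiv.Perm Γ` (Dehn twists), the Hurwitz
action on tuples is generated by the moves `(x, y) ↦ (y, τ_y x)`,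
`(x, y) ↦ (τ_x⁻¹ y, x)` and cyclic permutation.  If `τ_b⁻¹ (τ_a⁻¹ b) = a`,
then `(a, …, a, τ_a^{2k}(b), b)` with `2k+1` copies of `a` is
Hurwitz-equivalent to `(a, …, a, b)` with `2k+2` copies of `a`.
-/

/-- Hurwitz equivalence of tuples: the equivalence relation generated by
Hurwitz moves and cyclic permutation. -/
inductive HurwitzEquiv {Γ : Type*} (τ : Γ → Equiv.Perm Γ) : List Γ → List Γ → Prop
  | refl (l : List Γ) : HurwitzEquiv τ l l
  | symm {l l' : List Γ} : HurwitzEquiv τ l l' → HurwitzEquiv τ l' l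
  | trans {l₁ l₂ l₃ : List Γ} :
      HurwitzEquiv τ l₁ l₂ → HurwitzEquiv τ l₂ l₃ → HurwitzEquiv τ l₁ l₃
  | moveR (l₁ l₂ : List Γ) (x y : Γ) :
      HurwitzEquiv τ (l₁ ++ x :: y :: l₂) (l₁ ++ y :: (τ y x) :: l₂)
  | moveL (l₁ l₂ : List Γ) (x y : Γ) :
      HurwitzEquiv τ (l₁ ++ x :: y :: l₂) (l₁ ++ ((τ x)⁻¹ y) :: x :: l₂)
  | cyclic (x : Γ) (l : List Γ) : HurwitzEquiv τ (x :: l) (l ++ [x])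

/-- Auxiliary: slide an element leftwards past `n` copies of `a`, picking up
one factor of `(τ a)⁻¹` per step. -/
lemma hurwitz_slide {Γ : Type*} (τ : Γ → Equiv.Perm Γ) (a : Γ) :
    ∀ (n : ℕ) (x : Γ) (l : List Γ),
      HurwitzEquiv τ (List.replicate n a ++ x :: l)
        ((((τ a)⁻¹) ^ n) x :: (List.replicate n a ++ l))
  | 0, x, l => by simpa using HurwitzEquiv.refl (τ := τ) (x :: l)
  | n+1, x, l => by
    have h1 : HurwitzEquiv τ (List.replicate (n+1) a ++ x :: l)
        (List.replicate n a ++ ((τ a)⁻¹ x) :: a :: l) := by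
      have heq : List.replicate (n+1) a ++ x :: l = List.replicate n a ++ a :: x :: l := by
        rw [List.replicate_succ', List.append_assoc]; rfl
      rw [heq]
      exact HurwitzEquiv.moveL (τ := τ) (List.replicate n a) l a x
    have h2 := hurwitz_slide τ a n ((τ a)⁻¹ x) (a :: l)
    refine h1.trans (h2.trans ?_)
    have heq1 : ((((τ a)⁻¹) ^ n) ((τ a)⁻¹ x)) = (((τ a)⁻¹) ^ (n+1)) x := by
      simp [pow_succ, Equiv.Perm.mul_apply]
    have heq2 : List.replicate n a ++ a :: l = List.replicate (n+1) a ++ l := by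
      rw [List.replicate_succ', List.append_assoc]; rfl
    rw [heq1, heq2]
    exact HurwitzEquiv.refl _

theorem stmt_10 {Γ : Type*} (τ : Γ → Equiv.Perm Γ) (a b : Γ) (k : ℕ)
    (hrel : (τ b)⁻¹ ((τ a)⁻¹ b) = a) :
    HurwitzEquiv τ
      (List.replicate (2 * k + 1) a ++ [((τ a) ^ (2 * k)) b, b])
      (List.replicate (2 * k + 2) a ++ [b]) := by
  have h1 := hurwitz_slide τ a (2*k+1) (((τ a) ^ (2*k)) b) [b]
  have hc : ((((τ a)⁻¹) ^ (2*k+1)) (((τ a) ^ (2*k)) b)) = (τ a)⁻¹ b := by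
    have hmul : (((τ a)⁻¹) ^ (2*k+1)) * ((τ a) ^ (2*k)) = (τ a)⁻¹ := by group
    calc (((τ a)⁻¹) ^ (2*k+1)) (((τ a) ^ (2*k)) b)
        = ((((τ a)⁻¹) ^ (2*k+1)) * ((τ a) ^ (2*k))) b := rfl
      _ = (τ a)⁻¹ b := by rw [hmul]
  rw [hc] at h1
  have h2 : HurwitzEquiv τ (((τ a)⁻¹ b) :: (List.replicate (2*k+1) a ++ [b]))
      (List.replicate (2*k+1) a ++ [b, (τ a)⁻¹ b]) := by
    simpa using HurwitzEquiv.cyclic (τ := τ) ((τ a)⁻¹ b) (List.replicate (2*k+1) a ++ [b])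
  have h3 : HurwitzEquiv τ (List.replicate (2*k+1) a ++ [b, (τ a)⁻¹ b])
      (List.replicate (2*k+1) a ++ [a, b]) := by
    simpa [show (τ b).symm ((τ a).symm b) = a from hrel] using
      HurwitzEquiv.moveL (τ := τ) (List.replicate (2*k+1) a) [] b ((τ a)⁻¹ b)
  have hfin : List.replicate (2*k+1) a ++ [a, b] = List.replicate (2*k+2) a ++ [b] := by
    rw [show 2*k+2 = (2*k+1)+1 from rfl, List.replicate_succ' (n := 2*k+1) (a := a), List.append_assoc]; rfl
  rw [hfin] at h3
  exact (h1.trans h2).trans h3
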